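/- Let T ≥ 1 be an integer, let τ_1,…,τ_T and τ̂_1,…,τ̂_T be real numbers, and let γ_T ≥ 0 satisfy (1/T)·∑_{j=1}^T (τ̂_j − τ_j)² ≤ γ_T². Let F : ℝ → ℝ be Lipschitz continuous with constant L > 0. Define the empirical distribution functions F̃(x) = (1/T)·∑_{j=1}^T 1(τ_j ≤ x) and F̂(x) = (1/T)·∑_{j=1}^T 1(τ̂_j ≤ x). Then sup_{x∈ℝ} |F̃(x) − F̂(x)| ≤ (L+1)·γ_T^{2/3} + 2·sup_{x∈ℝ} |F̃(x) − F(x)|. -/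

import Mathlib

open Finset

/-- Lemma 1 (empirical-CDF comparison): if the estimated non-conformity scores `τhat`
are close to the oracle scores `τ` in mean square (Assumption 1), and the common CDF `F`
is `L`-Lipschitz (Assumption 2), then the sup-distance between the empirical CDF of the
oracle scores and that of the estimated scores is bounded by
`(L+1) γ^(2/3) + 2 sup_x |F̃(x) - F(x)|`. -/
theorem stmt_0 (T : ℕ) (hT : 1 ≤ T) (τ τhat : Fin T → ℝ) (γ : ℝ) (hγ : 0 ≤ γ)
    (hEst : (∑ j, (τhat j - τ j) ^ 2) / T ≤ γ ^ 2)
    (F : ℝ → ℝ) (L : ℝ) (hL : 0 < L)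
    (hLip : ∀ x y, |F x - F y| ≤ L * |x - y|)
    (hbdd : BddAbove (Set.range fun x : ℝ =>
      |(∑ j, if τ j ≤ x then (1 : ℝ) else 0) / T - F x|)) :
    (⨆ x : ℝ, |(∑ j, if τ j ≤ x then (1 : ℝ) else 0) / T
        - (∑ j, if τhat j ≤ x then (1 : ℝ) else 0) / T|)
      ≤ (L + 1) * γ ^ ((2 : ℝ) / 3)
        + 2 * ⨆ x : ℝ, |(∑ j, if τ j ≤ x then (1 : ℝ) else 0) / T - F x| := by
  have hT0 : (0 : ℝ) < T := by exact_mod_cast Nat.pos_of_ne_zero (by omega)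
  set G : ℝ → ℝ := fun x => (∑ j, if τ j ≤ x then (1 : ℝ) else 0) / T with hG
  set H : ℝ → ℝ := fun x => (∑ j, if τhat j ≤ x then (1 : ℝ) else 0) / T with hH
  set S : ℝ := ⨆ x : ℝ, |G x - F x| with hS
  have hGF : ∀ x, |G x - F x| ≤ S := fun x => le_ciSup hbdd x
  have hS0 : 0 ≤ S := le_trans (abs_nonneg _) (hGF 0)
  -- smoothness of G in terms of S and L
  have smooth : ∀ a b : ℝ, G a - G b ≤ 2 * S + L * |a - b| := by
    intro a b
    have h1 := abs_le.mp (hGF a)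
    have h2 := abs_le.mp (hGF b)
    have h3 := (abs_le.mp (hLip a b)).2
    have h3' : F a - F b ≤ L * |a - b| := le_trans (le_abs_self _) (hLip a b)
    linarith [h1.2, h2.1]
  apply ciSup_le
  intro x
  rcases eq_or_lt_of_le hγ with h0 | h0
  · -- γ = 0 : the scores coincide
    have hsum0 : (∑ j, (τhat j - τ j) ^ 2) = 0 := by
      have hnn : 0 ≤ ∑ j, (τhat j - τ j) ^ 2 :=
        Finset.sum_nonneg fun j _ => sq_nonneg _
      have hle : (∑ j, (τhat j - τ j) ^ 2) / (T : ℝ) ≤ 0 := by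
        rw [← h0] at hEst; simpa using hEst
      have := (div_le_iff₀ hT0).mp hle
      linarith
    have heq : ∀ j, τhat j = τ j := by
      intro j
      have := (Finset.sum_eq_zero_iff_of_nonneg
        (fun j _ => sq_nonneg (τhat j - τ j))).mp hsum0 j (Finset.mem_univ j)
      nlinarith [this]
    have hGH : G x = H x := by
      simp only [hG, hH, heq]
    rw [show |G x - H x| = 0 by rw [hGH]; simp]
    have : ((0:ℝ)) ^ ((2:ℝ)/3) = 0 := by
      rw [Real.zero_rpow (by norm_num)]
    rw [← h0, this]
    nlinarith [hS0, hL.le]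
  · set δ : ℝ := γ ^ ((2 : ℝ) / 3) with hδ
    have hδ0 : 0 < δ := Real.rpow_pos_of_pos h0 _
    have hδsq : δ ^ 2 = γ ^ ((4 : ℝ) / 3) := by
      rw [hδ, ← Real.rpow_natCast (γ ^ ((2:ℝ)/3)) 2, ← Real.rpow_mul hγ]
      norm_num
    have hratio : γ ^ 2 / δ ^ 2 = δ := by
      rw [hδsq, ← Real.rpow_natCast γ 2, ← Real.rpow_sub h0]
      norm_num
      rw [hδ]
    -- pointwise counting inequality
    have count : ∀ (a b : Fin T → ℝ) (y : ℝ),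
        (∑ j, if a j ≤ y then (1 : ℝ) else 0) / T
          ≤ (∑ j, if b j ≤ y + δ then (1 : ℝ) else 0) / T
            + (∑ j, (τhat j - τ j) ^ 2) / T / δ ^ 2 →
        True := fun _ _ _ _ => trivial
    have key : ∀ (a b : Fin T → ℝ),
        (∀ j, (b j - a j) ^ 2 ≤ (τhat j - τ j) ^ 2) →
        ∀ y : ℝ,
        (∑ j, if a j ≤ y then (1 : ℝ) else 0) / T
          ≤ (∑ j, if b j ≤ y + δ then (1 : ℝ) else 0) / T + δ := by
      intro a b hab y
      have hpt : ∀ j : Fin T,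
          (if a j ≤ y then (1 : ℝ) else 0)
            ≤ (if b j ≤ y + δ then (1 : ℝ) else 0) + (b j - a j) ^ 2 / δ ^ 2 := by
        intro j
        by_cases h1 : a j ≤ y
        · by_cases h2 : b j ≤ y + δ
          · simp [h1, h2]
            positivity
          · push_neg at h2
            have hgap : δ ≤ b j - a j := by linarith
            have hsq : δ ^ 2 ≤ (b j - a j) ^ 2 := by nlinarith
            have h3 : (1 : ℝ) ≤ (b j - a j) ^ 2 / δ ^ 2 := by
              rw [le_div_iff₀ (by positivity)]; linarith
            rw [if_pos h1, if_neg (not_le.mpr h2)]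
            linarith
        · simp [h1]
          positivity
      have hsumpt : (∑ j, if a j ≤ y then (1 : ℝ) else 0)
          ≤ (∑ j, if b j ≤ y + δ then (1 : ℝ) else 0)
            + (∑ j, (b j - a j) ^ 2) / δ ^ 2 := by
        calc (∑ j, if a j ≤ y then (1 : ℝ) else 0)
            ≤ ∑ j, ((if b j ≤ y + δ then (1 : ℝ) else 0) + (b j - a j) ^ 2 / δ ^ 2) :=
              Finset.sum_le_sum fun j _ => hpt j
          _ = (∑ j, if b j ≤ y + δ then (1 : ℝ) else 0)
              + (∑ j, (b j - a j) ^ 2) / δ ^ 2 := by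
              rw [Finset.sum_add_distrib, Finset.sum_div]
      have herr : (∑ j, (b j - a j) ^ 2) / δ ^ 2 / T ≤ δ := by
        have hsq_le : (∑ j, (b j - a j) ^ 2) ≤ ∑ j, (τhat j - τ j) ^ 2 :=
          Finset.sum_le_sum fun j _ => hab j
        have h1 : (∑ j, (b j - a j) ^ 2) / (T : ℝ) ≤ γ ^ 2 :=
          le_trans (by gcongr) hEst
        have h2 : ((∑ j, (b j - a j) ^ 2) / (T : ℝ)) / δ ^ 2 ≤ γ ^ 2 / δ ^ 2 := by
          gcongr
        rw [hratio] at h2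
        calc (∑ j, (b j - a j) ^ 2) / δ ^ 2 / T
            = ((∑ j, (b j - a j) ^ 2) / (T : ℝ)) / δ ^ 2 := by ring
          _ ≤ δ := h2
      calc (∑ j, if a j ≤ y then (1 : ℝ) else 0) / T
          ≤ ((∑ j, if b j ≤ y + δ then (1 : ℝ) else 0)
              + (∑ j, (b j - a j) ^ 2) / δ ^ 2) / T := by gcongr
        _ = (∑ j, if b j ≤ y + δ then (1 : ℝ) else 0) / T
              + (∑ j, (b j - a j) ^ 2) / δ ^ 2 / T := by ring
        _ ≤ (∑ j, if b j ≤ y + δ then (1 : ℝ) else 0) / T + δ := by linarith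
    -- H x ≤ G (x+δ) + δ
    have hHG : H x ≤ G (x + δ) + δ :=
      key τhat τ (fun j => by nlinarith [sq_nonneg (τhat j - τ j)]) x
    -- G (x-δ) ≤ H x + δ
    have hGH : G (x - δ) ≤ H x + δ := by
      have h := key τ τhat (fun j => by nlinarith [sq_nonneg (τhat j - τ j)]) (x - δ)
      rw [sub_add_cancel] at h
      exact h
    have hs1 := smooth (x + δ) x
    have hs2 := smooth x (x - δ)
    have habs1 : |x + δ - x| = δ := by rw [show x + δ - x = δ by ring, abs_of_pos hδ0]
    have habs2 : |x - (x - δ)| = δ := by rw [show x - (x - δ) = δ by ring, abs_of_pos hδ0]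
    rw [habs1] at hs1
    rw [habs2] at hs2
    rw [abs_le]
    constructor
    · linarith
    · linarith
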